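/- Let q ≥ 2 and f : {0,…,q−1}² → {0,…,q−1}, and suppose that for every κ > 0 there exists a probability distribution p on {(i,j,f(i,j)) : i+j ≤ q−1} with all marginal masses p(xᵢ), p(yⱼ), p(z_k) at least 1/q − κ (as defined via sums of p over triples containing the given variable). Then the map j ↦ f(q−1−j, j) from {0,…,q−1} to {0,…,q−1} is surjective (equivalently, bijective). -/

import Mathlib

/-- If for every `κ > 0` there is a probability distribution on the triples
`(i, j, f(i,j))` with `i + j ≤ q − 1` whose marginal masses are all at least
`1/q − κ`, then the diagonal map `j ↦ f(q−1−j, j)` is surjective. -/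
theorem lower_triangular_diagonal_surjective (q : ℕ) (hq : 2 ≤ q)
    (f : Fin q → Fin q → Fin q)
    (h : ∀ κ : ℝ, 0 < κ →
      ∃ p : Fin q → Fin q → ℝ,
        (∀ i j, 0 ≤ p i j) ∧
        (∀ i j : Fin q, q ≤ (i : ℕ) + (j : ℕ) → p i j = 0) ∧
        (∑ i, ∑ j, p i j = 1) ∧
        (∀ i : Fin q, 1 / q - κ ≤ ∑ j, p i j) ∧
        (∀ j : Fin q, 1 / q - κ ≤ ∑ i, p i j) ∧
        (∀ k : Fin q, 1 / q - κ ≤ ∑ i, ∑ j, if f i j = k then p i j else 0)) :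
    Function.Surjective (fun j : Fin q => f ⟨q - 1 - (j : ℕ), by omega⟩ j) := by
  intro k
  by_contra hk
  push_neg at hk

  have hq2 : (2:ℝ) ≤ q := by exact_mod_cast hq
  have hq0 : (0:ℝ) < q := by linarith
  set κ : ℝ := 1/(2*(q:ℝ)^3) with hκdef
  have hκpos : 0 < κ := by positivity
  obtain ⟨p, hpos, hsupp, hsum, hrow, hcol, hz⟩ := h κ hκpos
  have hzk := hz k
  -- termwise bound: indicator ≤ weight * p
  have key : ∀ i j : Fin q, (if f i j = k then p i j else 0)
      ≤ ((q:ℝ) - 1 - (i:ℕ) - (j:ℕ)) * p i j := by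
    intro i j
    by_cases hp : p i j = 0
    · by_cases hf : f i j = k <;> simp [hf, hp]
    · have hle : (i:ℕ) + (j:ℕ) ≤ q - 1 := by
        by_contra hc
        exact hp (hsupp i j (by omega))
      by_cases hf : f i j = k
      · have hne : (i:ℕ) + (j:ℕ) ≠ q - 1 := by
          intro he
          apply hk j
          have hi : (⟨q - 1 - (j:ℕ), by omega⟩ : Fin q) = i := by
            apply Fin.ext
            simp only
            omega
          rw [hi]
          exact hf
        have h1 : (1:ℝ) ≤ (q:ℝ) - 1 - (i:ℕ) - (j:ℕ) := by
          have hj : (i:ℕ) + (j:ℕ) + 2 ≤ q := by omega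
          have : ((i:ℕ):ℝ) + ((j:ℕ):ℝ) + 2 ≤ (q:ℝ) := by exact_mod_cast hj
          linarith
        simp only [hf, if_pos]
        nlinarith [hpos i j]
      · simp only [hf, if_neg, not_false_iff]
        have hw : (0:ℝ) ≤ (q:ℝ) - 1 - (i:ℕ) - (j:ℕ) := by
          have hj : (i:ℕ) + (j:ℕ) + 1 ≤ q := by omega
          have : ((i:ℕ):ℝ) + ((j:ℕ):ℝ) + 1 ≤ (q:ℝ) := by exact_mod_cast hj
          linarith
        exact mul_nonneg hw (hpos i j)
  have hS : (∑ i : Fin q, ∑ j : Fin q, if f i j = k then p i j else 0)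
      ≤ ∑ i : Fin q, ∑ j : Fin q, ((q:ℝ) - 1 - ((i:ℕ):ℝ) - ((j:ℕ):ℝ)) * p i j :=
    Finset.sum_le_sum fun i _ => Finset.sum_le_sum fun j _ => key i j
  -- expand the weighted sum
  have expand : (∑ i : Fin q, ∑ j : Fin q, ((q:ℝ) - 1 - ((i:ℕ):ℝ) - ((j:ℕ):ℝ)) * p i j)
      = ((q:ℝ) - 1) * (∑ i : Fin q, ∑ j : Fin q, p i j)
        - (∑ i : Fin q, ((i:ℕ):ℝ) * ∑ j : Fin q, p i j)
        - (∑ j : Fin q, ((j:ℕ):ℝ) * ∑ i : Fin q, p i j) := by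
    rw [Finset.mul_sum, ← Finset.sum_sub_distrib]
    rw [show (∑ j : Fin q, ((j:ℕ):ℝ) * ∑ i : Fin q, p i j)
        = ∑ i : Fin q, ∑ j : Fin q, ((j:ℕ):ℝ) * p i j by
      rw [Finset.sum_comm]
      exact Finset.sum_congr rfl fun j _ => by rw [Finset.mul_sum]]
    rw [← Finset.sum_sub_distrib]
    refine Finset.sum_congr rfl fun i _ => ?_
    rw [Finset.mul_sum, Finset.mul_sum, ← Finset.sum_sub_distrib, ← Finset.sum_sub_distrib]
    exact Finset.sum_congr rfl fun j _ => by ring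
  -- Gauss sum
  have hsub1 : ((q - 1 : ℕ) : ℝ) = (q:ℝ) - 1 := by
    have h1 : (1:ℕ) ≤ q := by omega
    rw [Nat.cast_sub h1, Nat.cast_one]
  have hG : (∑ i : Fin q, ((i:ℕ):ℝ)) * 2 = (q:ℝ) * ((q:ℝ) - 1) := by
    rw [Fin.sum_univ_eq_sum_range (fun i => ((i:ℕ):ℝ)) q]
    have h2 := Finset.sum_range_id_mul_two q
    have hcast : ((∑ i ∈ Finset.range q, i : ℕ) : ℝ) * 2 = ((q * (q-1) : ℕ) : ℝ) := by
      exact_mod_cast congrArg (Nat.cast : ℕ → ℝ) h2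
    rw [Nat.cast_sum, Nat.cast_mul, hsub1] at hcast
    exact hcast
  have hκq : κ ≤ 1 / (q:ℝ) := by
    rw [hκdef, div_le_div_iff₀ (by positivity) hq0]
    nlinarith [hq2, hq0, sq_nonneg ((q:ℝ))]
  have hA : ((1:ℝ)/q - κ) * (∑ i : Fin q, ((i:ℕ):ℝ))
      ≤ ∑ i : Fin q, ((i:ℕ):ℝ) * ∑ j : Fin q, p i j := by
    rw [Finset.mul_sum]
    refine Finset.sum_le_sum fun i _ => ?_
    rw [mul_comm]
    exact mul_le_mul_of_nonneg_left (hrow i) (Nat.cast_nonneg _)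
  have hB : ((1:ℝ)/q - κ) * (∑ i : Fin q, ((i:ℕ):ℝ))
      ≤ ∑ j : Fin q, ((j:ℕ):ℝ) * ∑ i : Fin q, p i j := by
    rw [Finset.mul_sum]
    refine Finset.sum_le_sum fun j _ => ?_
    rw [mul_comm]
    exact mul_le_mul_of_nonneg_left (hcol j) (Nat.cast_nonneg _)
  have hfin : (1:ℝ)/q - κ ≤ ((q:ℝ) - 1) - ((1:ℝ)/q - κ) * ((q:ℝ) * ((q:ℝ) - 1)) := by
    have hchain := hzk.trans (hS.trans_eq expand)
    rw [hsum] at hchain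
    nlinarith [hchain, hA, hB, hG, hκq, hq0]
  have hu1 : (1:ℝ)/q * ((q:ℝ) * ((q:ℝ) - 1)) = (q:ℝ) - 1 := by
    field_simp
  have h2 : (1:ℝ)/q - κ ≤ κ * ((q:ℝ) * ((q:ℝ) - 1)) := by
    nlinarith [hfin, hu1]
  have hq3 : (0:ℝ) < 2*(q:ℝ)^3 := by positivity
  have e1 : (1:ℝ)/q * (2*(q:ℝ)^3) = 2*(q:ℝ)^2 := by
    field_simp
  have e2 : κ * (2*(q:ℝ)^3) = 1 := by
    rw [hκdef]
    field_simp
  have e3 : κ * ((q:ℝ) * ((q:ℝ) - 1)) * (2*(q:ℝ)^3) = (q:ℝ) * ((q:ℝ) - 1) := by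
    rw [hκdef]
    field_simp
  have hm := mul_le_mul_of_nonneg_right h2 (le_of_lt hq3)
  nlinarith [hm, e1, e2, e3, hq2, sq_nonneg ((q:ℝ))]
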